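/- For k > 0, m ∈ ℕ, s > 1 with k - m = 1/p - 1/s + α (α > 0, 0 < p ≤ 1), the test functions f_r(z) = (1-r)^{k+1-α-1/p}/(1 - r z) on the unit disk satisfy ‖f_r‖_{H^s_m} ≥ C > 0 for all r ∈ (1/2, 1), where H^s_m = {f analytic : sup_{R<1} M_s(D^m f, R) < ∞} with norm ‖f‖_{H^s_m} = ‖D^m f‖_{H^s}. -/

import Mathlib

open MeasureTheory Metric ENNReal

/-- Coefficientwise fractional derivative of order `s`. -/
noncomputable def Dfrac (s : ℝ) (f : ℂ → ℂ) (z : ℂ) : ℂ :=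
  ∑' k : ℕ, ((Real.Gamma (s + k + 1) / (Real.Gamma (k + 1) * Real.Gamma (s + 1)) : ℝ) : ℂ)
    * (iteratedDeriv k f 0 / (Nat.factorial k : ℂ)) * z ^ k

/-- The `p`-th integral mean, valued in `ℝ≥0∞`. -/
noncomputable def MpE (p : ℝ) (f : ℂ → ℂ) (r : ℝ) : ℝ≥0∞ :=
  ((ENNReal.ofReal (2 * Real.pi))⁻¹ *
    ∫⁻ θ in Set.Ioc (0 : ℝ) (2 * Real.pi),
      ENNReal.ofReal (‖f ((r : ℂ) * Complex.exp (θ * Complex.I))‖ ^ p)) ^ (1 / p)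


open MeasureTheory Metric ENNReal

lemma one_sub_ne_zero_of_norm_lt_one {u : ℂ} (hu : ‖u‖ < 1) : (1 : ℂ) - u ≠ 0 := by
  intro h
  have : u = 1 := by linear_combination -h
  simp [this] at hu

lemma iteratedDeriv_geom_aux (r : ℝ) (hr0 : 0 ≤ r) (hr1 : r ≤ 1) (c : ℂ) (n : ℕ) :
    ∀ z ∈ Metric.ball (0:ℂ) 1,
      iteratedDeriv n (fun z : ℂ => c * (1 - (r:ℂ) * z)⁻¹) z
        = c * (Nat.factorial n : ℂ) * (r:ℂ) ^ n * ((1 - (r:ℂ) * z) ^ (n+1))⁻¹ := by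
  induction n with
  | zero =>
    intro z hz
    simp [iteratedDeriv_zero]
  | succ n ih =>
    intro z hz
    have hz1 : ‖z‖ < 1 := by simpa using hz
    have hrz : ‖(r:ℂ) * z‖ < 1 := by
      rw [norm_mul]
      calc ‖(r:ℂ)‖ * ‖z‖ ≤ 1 * ‖z‖ := by
            apply mul_le_mul_of_nonneg_right _ (norm_nonneg z)
            simpa [Complex.norm_real, abs_of_nonneg hr0] using hr1
        _ = ‖z‖ := one_mul _
        _ < 1 := hz1
    have hne : (1 : ℂ) - (r:ℂ) * z ≠ 0 := one_sub_ne_zero_of_norm_lt_one hrz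
    rw [iteratedDeriv_succ]
    have hEq : iteratedDeriv n (fun z : ℂ => c * (1 - (r:ℂ) * z)⁻¹)
        =ᶠ[nhds z] fun w : ℂ => c * (Nat.factorial n : ℂ) * (r:ℂ) ^ n
            * ((1 - (r:ℂ) * w) ^ (n+1))⁻¹ := by
      filter_upwards [isOpen_ball.mem_nhds hz] with w hw using ih w hw
    rw [hEq.deriv_eq]
    have h1 : HasDerivAt (fun w : ℂ => 1 - (r:ℂ) * w) (-(r:ℂ)) z := by
      simpa using ((hasDerivAt_id z).const_mul (r:ℂ)).const_sub 1
    have h2 := ((h1.pow (n+1)).inv (pow_ne_zero _ hne)).const_mul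
      (c * (Nat.factorial n : ℂ) * (r:ℂ) ^ n)
    rw [(show HasDerivAt (fun w : ℂ => c * (Nat.factorial n : ℂ) * (r:ℂ) ^ n
        * ((1 - (r:ℂ) * w) ^ (n+1))⁻¹) _ z from h2).deriv]
    have hfac : (Nat.factorial (n+1) : ℂ) = (n+1) * (Nat.factorial n : ℂ) := by
      push_cast [Nat.factorial_succ]; ring
    simp only [Pi.pow_apply, Nat.add_sub_cancel, Nat.cast_add, Nat.cast_one, hfac]
    field_simp [hfac]
    ring

lemma Dfrac_geom (r : ℝ) (hr0 : 0 ≤ r) (hr1 : r ≤ 1) (c : ℂ) (m : ℕ) (w : ℂ)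
    (hw : ‖(r:ℂ) * w‖ < 1) :
    Dfrac (m : ℝ) (fun z : ℂ => c * (1 - (r:ℂ) * z)⁻¹) w
      = c * ((1 - (r:ℂ) * w) ^ (m+1))⁻¹ := by
  have h0 : (0:ℂ) ∈ Metric.ball (0:ℂ) 1 := by simp
  have hterm : ∀ n : ℕ,
      (((Real.Gamma ((m:ℝ) + n + 1) / (Real.Gamma ((n:ℝ) + 1) * Real.Gamma ((m:ℝ) + 1))) : ℝ) : ℂ)
        * (iteratedDeriv n (fun z : ℂ => c * (1 - (r:ℂ) * z)⁻¹) 0 / (Nat.factorial n : ℂ))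
        * w ^ n
      = c * (((n + m).choose m : ℂ) * ((r:ℂ) * w) ^ n) := by
    intro n
    rw [iteratedDeriv_geom_aux r hr0 hr1 c n 0 h0]
    have hG : (Real.Gamma ((m:ℝ) + n + 1) / (Real.Gamma ((n:ℝ) + 1) * Real.Gamma ((m:ℝ) + 1)))
        = ((n + m).choose m : ℝ) := by
      have h1 : (m:ℝ) + n + 1 = ((m + n : ℕ) : ℝ) + 1 := by push_cast; ring
      rw [h1, Real.Gamma_nat_eq_factorial, Real.Gamma_nat_eq_factorial,
        Real.Gamma_nat_eq_factorial]
      have hfac : (n + m).choose m * Nat.factorial m * Nat.factorial n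
          = Nat.factorial (m + n) := by
        have := Nat.choose_mul_factorial_mul_factorial (Nat.le_add_left m n)
        simpa [Nat.add_sub_cancel, Nat.add_comm] using this
      have : (((n + m).choose m : ℝ)) * (Nat.factorial m : ℝ) * (Nat.factorial n : ℝ)
          = (Nat.factorial (m + n) : ℝ) := by exact_mod_cast congrArg Nat.cast hfac
      field_simp [Nat.factorial_ne_zero]
      linarith [this]
    rw [hG]
    have hn : (Nat.factorial n : ℂ) ≠ 0 := by exact_mod_cast Nat.factorial_ne_zero n
    simp only [mul_pow]
    field_simp
    push_cast
    ring
  unfold Dfrac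
  rw [tsum_congr hterm, tsum_mul_left,
    tsum_choose_mul_geometric_of_norm_lt_one m hw, one_div]

/-- The test functions `f_r(z) = (1-r)^{k+1-α-1/p}/(1-rz)` have `H^s_m` norm
bounded below for `r ∈ (1/2, 1)`, when `k - m = 1/p - 1/s + α`. -/
theorem test_function_Hnorm_lower (s p α k : ℝ) (m : ℕ) (hs : 1 < s)
    (hp : 0 < p) (hp1 : p ≤ 1) (hα : 0 < α) (hk0 : 0 < k) (hm : 1 ≤ m)
    (hk : k - (m : ℝ) = 1 / p - 1 / s + α) :
    ∃ C : ℝ, 0 < C ∧ ∀ r ∈ Set.Ioo (1 / 2 : ℝ) 1,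
      ENNReal.ofReal C ≤
        ⨆ R ∈ Set.Ico (0 : ℝ) 1,
          MpE s (Dfrac (m : ℝ) (fun z => (((1 - r) ^ (k + 1 - α - 1 / p) : ℝ) : ℂ)
            * (1 - (r : ℂ) * z)⁻¹)) R := by
  have hs0 : 0 < s := lt_trans one_pos hs
  have hπ : 0 < Real.pi := Real.pi_pos
  refine ⟨((2*Real.pi)⁻¹ * (4:ℝ) ^ (-(((m:ℝ)+1) * s))) ^ (1/s), ?_, ?_⟩
  · apply Real.rpow_pos_of_pos
    positivity
  intro r hr
  obtain ⟨hr2, hr1⟩ := hr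
  have hr0 : (0:ℝ) < r := lt_trans (by norm_num) hr2
  have ht0 : (0:ℝ) < 1 - r := by linarith
  have ht2 : 1 - r < 1/2 := by linarith
  have he : k + 1 - α - 1/p = (m:ℝ) + 1 - 1/s := by linarith
  set t : ℝ := 1 - r with htdef
  set e : ℝ := (m:ℝ) + 1 - 1/s with hedef
  set K : ℝ := t ^ e * (4*t) ^ (-((m:ℝ)+1)) with hKdef
  have hK0 : 0 < K :=
    mul_pos (Real.rpow_pos_of_pos ht0 _) (Real.rpow_pos_of_pos (by linarith) _)
  set g : ℂ → ℂ := fun z => ((t ^ (k + 1 - α - 1 / p) : ℝ) : ℂ)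
      * (1 - (r : ℂ) * z)⁻¹ with hgdef
  -- pointwise lower bound
  have hmain : ∀ θ ∈ Set.Ioc (0:ℝ) t,
      ENNReal.ofReal (K ^ s) ≤
        ENNReal.ofReal (‖Dfrac (m:ℝ) g ((r:ℂ) * Complex.exp ((θ:ℂ) * Complex.I))‖ ^ s) := by
    intro θ hθ
    obtain ⟨hθ0, hθt⟩ := hθ
    set w : ℂ := (r:ℂ) * Complex.exp ((θ:ℂ) * Complex.I) with hwdef
    have hre : ‖Complex.exp ((θ:ℂ) * Complex.I)‖ = 1 := by
      exact Complex.norm_exp_ofReal_mul_I θ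
    have hnw : ‖(r:ℂ) * w‖ < 1 := by
      rw [hwdef, norm_mul, norm_mul, hre, Complex.norm_real, Real.norm_eq_abs,
        abs_of_pos hr0]
      nlinarith
    rw [hgdef, Dfrac_geom r hr0.le hr1.le _ m w hnw]
    have hXne : (1:ℂ) - (r:ℂ)*w ≠ 0 := one_sub_ne_zero_of_norm_lt_one hnw
    have hXpos : 0 < ‖(1:ℂ) - (r:ℂ)*w‖ := norm_pos_iff.mpr hXne
    have hexp : ‖Complex.exp ((θ:ℂ) * Complex.I) - 1‖ ≤ 2*θ := by
      have habs : ‖(θ:ℂ) * Complex.I‖ = θ := by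
        rw [norm_mul, Complex.norm_I, Complex.norm_real, mul_one, Real.norm_eq_abs, abs_of_pos hθ0]
      have h := Complex.norm_exp_sub_one_le (x := (θ:ℂ) * Complex.I)
        (by rw [habs]; linarith)
      rw [habs] at h
      simpa using h
    have hXeq : (1:ℂ) - (r:ℂ)*w
        = ((1 - r^2 : ℝ):ℂ) - ((r:ℝ):ℂ)^2 * (Complex.exp ((θ:ℂ) * Complex.I) - 1) := by
      rw [hwdef]; push_cast; ring
    have hX : ‖(1:ℂ) - (r:ℂ)*w‖ ≤ 4*t := by
      rw [hXeq]
      calc ‖((1 - r^2 : ℝ):ℂ) - ((r:ℝ):ℂ)^2 * (Complex.exp ((θ:ℂ) * Complex.I) - 1)‖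
          ≤ ‖((1 - r^2 : ℝ):ℂ)‖ + ‖((r:ℝ):ℂ)^2 * (Complex.exp ((θ:ℂ) * Complex.I) - 1)‖ :=
            norm_sub_le _ _
        _ ≤ (1 - r^2) + r^2 * (2*θ) := by
            apply add_le_add
            · rw [Complex.norm_real, Real.norm_eq_abs, abs_of_nonneg (by nlinarith)]
            · rw [norm_mul, norm_pow, Complex.norm_real, Real.norm_eq_abs, abs_of_pos hr0]
              exact mul_le_mul_of_nonneg_left hexp (by positivity)
        _ ≤ 4*t := by
            have h1 : 1 - r^2 ≤ 2*t :=
              calc 1 - r^2 = t*(1+r) := by rw [htdef]; ring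
                _ ≤ t*2 := mul_le_mul_of_nonneg_left (by linarith) ht0.le
                _ = 2*t := by ring
            have hr2le : r^2 ≤ 1 :=
              calc r^2 = r*r := sq r
                _ ≤ 1*1 := mul_le_mul hr1.le hr1.le hr0.le zero_le_one
                _ = 1 := one_mul 1
            have h2 : r^2*(2*θ) ≤ 2*θ :=
              calc r^2*(2*θ) ≤ 1*(2*θ) := mul_le_mul_of_nonneg_right hr2le (by linarith)
                _ = 2*θ := one_mul _
            linarith
    apply ENNReal.ofReal_le_ofReal
    apply Real.rpow_le_rpow hK0.le _ hs0.le
    rw [norm_mul, norm_inv, norm_pow]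
    have hc : ‖((t ^ (k+1-α-1/p) : ℝ) : ℂ)‖ = t ^ e := by
      rw [Complex.norm_real, Real.norm_eq_abs, abs_of_nonneg (Real.rpow_nonneg ht0.le _), he]
    rw [hc, hKdef]
    apply mul_le_mul_of_nonneg_left _ (Real.rpow_nonneg ht0.le _)
    have h1 : (4*t) ^ (-((m:ℝ)+1)) = (((4*t) ^ (m+1) : ℝ))⁻¹ := by
      rw [Real.rpow_neg (by positivity)]
      congr 1
      rw [show ((m:ℝ)+1) = ((m+1 : ℕ) : ℝ) by push_cast; ring, Real.rpow_natCast]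
    rw [h1]
    exact inv_anti₀ (by positivity) (pow_le_pow_left₀ (norm_nonneg _) hX (m+1))
  -- choose R = r in the supremum
  have hrS : r ∈ Set.Ico (0:ℝ) 1 := ⟨hr0.le, hr1⟩
  refine le_trans ?_ (le_biSup _ hrS)
  have ht2π : t ≤ 2*Real.pi := by nlinarith [Real.pi_gt_three, htdef]
  have hchain : ENNReal.ofReal (K^s) * ENNReal.ofReal t ≤
      ∫⁻ θ in Set.Ioc (0:ℝ) (2*Real.pi),
        ENNReal.ofReal (‖Dfrac (m:ℝ) g ((r:ℂ) * Complex.exp ((θ:ℂ) * Complex.I))‖ ^ s) := by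
    calc ENNReal.ofReal (K^s) * ENNReal.ofReal t
        = ∫⁻ _ in Set.Ioc (0:ℝ) t, ENNReal.ofReal (K^s) := by
          rw [setLIntegral_const, Real.volume_Ioc, sub_zero]
      _ ≤ ∫⁻ θ in Set.Ioc (0:ℝ) t,
            ENNReal.ofReal (‖Dfrac (m:ℝ) g ((r:ℂ) * Complex.exp ((θ:ℂ) * Complex.I))‖ ^ s) :=
          setLIntegral_mono' measurableSet_Ioc hmain
      _ ≤ _ := lintegral_mono_set (Set.Ioc_subset_Ioc_right ht2π)
  have hsne : s ≠ 0 := ne_of_gt hs0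
  have hes : e * s = ((m:ℝ)+1) * s - 1 := by
    rw [hedef]
    field_simp
  have hKs : K ^ s = t ^ (e*s) *
      ((4:ℝ) ^ (-(((m:ℝ)+1)*s)) * t ^ (-(((m:ℝ)+1)*s))) := by
    rw [hKdef, Real.mul_rpow (Real.rpow_nonneg ht0.le _) (Real.rpow_nonneg (by linarith) _),
      ← Real.rpow_mul ht0.le, ← Real.rpow_mul (by linarith : (0:ℝ) ≤ 4*t), neg_mul,
      Real.mul_rpow (by norm_num : (0:ℝ) ≤ 4) ht0.le]
  have hKst : K ^ s * t = (4:ℝ) ^ (-(((m:ℝ)+1)*s)) := by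
    rw [hKs]
    have h2 : t ^ (e*s) * ((4:ℝ)^(-(((m:ℝ)+1)*s)) * t^(-(((m:ℝ)+1)*s))) * t
        = (4:ℝ)^(-(((m:ℝ)+1)*s)) * (t ^ (e*s) * t^(-(((m:ℝ)+1)*s)) * t^(1:ℝ)) := by
      rw [Real.rpow_one]; ring
    have h3 : e*s + -(((m:ℝ)+1)*s) + 1 = 0 := by rw [hes]; ring
    rw [h2, ← Real.rpow_add ht0, ← Real.rpow_add ht0, h3, Real.rpow_zero, mul_one]
  calc ENNReal.ofReal (((2*Real.pi)⁻¹ * (4:ℝ) ^ (-(((m:ℝ)+1) * s))) ^ (1/s))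
      = ((ENNReal.ofReal (2*Real.pi))⁻¹ * (ENNReal.ofReal (K^s) * ENNReal.ofReal t)) ^ (1/s) := by
        rw [← ENNReal.ofReal_mul (by positivity : (0:ℝ) ≤ K^s), hKst,
          ← ENNReal.ofReal_inv_of_pos (by positivity : (0:ℝ) < 2*Real.pi),
          ← ENNReal.ofReal_mul (by positivity : (0:ℝ) ≤ (2*Real.pi)⁻¹),
          ← ENNReal.ofReal_rpow_of_pos (by positivity)]
    _ ≤ MpE s (Dfrac (m:ℝ) g) r := by
        rw [MpE]
        exact ENNReal.rpow_le_rpow (mul_le_mul_right hchain _) (by positivity)
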